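/- Let m ≥ 1 and let S : M_m(ℂ) → M_m(ℂ) be a bijective linear map satisfying S(a b* c) = S(c) S(b)* S(a) for all a, b, c ∈ M_m(ℂ) (a TRO anti-isomorphism). Then for every n ≥ 1 the operator norm of the n-th amplification S_n : M_n(M_m(ℂ)) → M_n(M_m(ℂ)) equals min(n, m). -/

import Mathlib

/-- A function `ν` on a complex `*`-algebra is a C*-norm if it is a norm which is
submultiplicative and satisfies the C*-identity `ν (x* x) = ν x ^ 2`.  On `Mₙ(A)`
(`A` a C*-algebra) such a norm exists and is unique: it is "the" C*-norm. -/
def IsCStarNorm {M : Type*} [NonUnitalRing M] [Module ℂ M] [Star M] (ν : M → ℝ) : Prop :=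
  (∀ x, ν x = 0 ↔ x = 0) ∧
  (∀ x y, ν (x + y) ≤ ν x + ν y) ∧
  (∀ (c : ℂ) (x), ν (c • x) = ‖c‖ * ν x) ∧
  (∀ x y, ν (x * y) ≤ ν x * ν y) ∧
  (∀ x, ν (star x * x) = ν x * ν x)

lemma IsCStarNorm.eq_norm {A B : Type*} [Ring A] [StarRing A] [Algebra ℂ A] [StarModule ℂ A]
    [FiniteDimensional ℂ A]
    [NormedRing B] [StarRing B] [CStarRing B] [NormedAlgebra ℂ B] [CompleteSpace B]
    [StarModule ℂ B]
    {ν : A → ℝ} (hν : IsCStarNorm ν) (e : A ≃⋆ₐ[ℂ] B) (x : A) : ν x = ‖e x‖ := by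
  obtain ⟨h0, hadd, hsmul, hmul, hstar⟩ := hν
  letI : NormedAddCommGroup A := AddGroupNorm.toNormedAddCommGroup
    { toFun := ν
      map_zero' := (h0 0).mpr rfl
      add_le' := hadd
      neg' := fun x => by simpa using hsmul (-1) x
      eq_zero_of_map_eq_zero' := fun x h => (h0 x).mp h }
  letI : NormedRing A := { ‹NormedAddCommGroup A›, ‹Ring A› with norm_mul_le := fun a b => by exact hmul a b }
  letI : NormedAlgebra ℂ A := { ‹Algebra ℂ A› with norm_smul_le := fun c x => le_of_eq (by exact hsmul c x) }
  letI : CStarRing A := ⟨fun x => by exact (hstar x).ge⟩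
  letI : CompleteSpace A := FiniteDimensional.complete ℂ A
  letI : CStarAlgebra A := {}
  letI : CStarAlgebra B := {}
  exact (NonUnitalStarAlgHom.norm_map e e.injective x).symm

open scoped Matrix.Norms.L2Operator ComplexConjugate

variable {ι : Type*} [Fintype ι] [DecidableEq ι]

lemma inner_toEuclideanCLM (M : Matrix ι ι ℂ) (f g : EuclideanSpace ℂ ι) :
    (inner ℂ f ((Matrix.toEuclideanCLM (𝕜 := ℂ) M) g) : ℂ)
      = ∑ p, ∑ q, conj (f p) * (M p q * g q) := by
  have hg : (Matrix.toEuclideanCLM (𝕜 := ℂ) M) g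
      = (WithLp.equiv 2 _).symm (M.mulVec (WithLp.equiv 2 _ g)) := by
    rfl
  rw [PiLp.inner_apply, hg]
  simp [Matrix.mulVec, dotProduct, Finset.mul_sum, RCLike.inner_apply]
  refine Finset.sum_congr rfl fun p _ => ?_
  rw [Finset.sum_mul]; exact Finset.sum_congr rfl fun q _ => mul_comm _ _

lemma bilin_le (M : Matrix ι ι ℂ) (f g : EuclideanSpace ℂ ι) :
    ‖∑ p, ∑ q, conj (f p) * (M p q * g q)‖ ≤ ‖M‖ * (‖f‖ * ‖g‖) := by
  rw [← inner_toEuclideanCLM]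
  calc ‖(inner ℂ f ((Matrix.toEuclideanCLM (𝕜 := ℂ) M) g) : ℂ)‖
      ≤ ‖f‖ * ‖(Matrix.toEuclideanCLM (𝕜 := ℂ) M) g‖ := norm_inner_le_norm _ _
    _ ≤ ‖f‖ * (‖(Matrix.toEuclideanCLM (𝕜 := ℂ) M)‖ * ‖g‖) := by
        gcongr; exact ContinuousLinearMap.le_opNorm _ _
    _ = ‖M‖ * (‖f‖ * ‖g‖) := by rw [Matrix.cstar_norm_def]; ring

lemma norm_le_of_bilin (M : Matrix ι ι ℂ) {C : ℝ} (hC : 0 ≤ C)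
    (h : ∀ f g : EuclideanSpace ℂ ι,
      ‖∑ p, ∑ q, conj (f p) * (M p q * g q)‖ ≤ C * (‖f‖ * ‖g‖)) :
    ‖M‖ ≤ C := by
  rw [Matrix.cstar_norm_def]
  refine ContinuousLinearMap.opNorm_le_bound _ hC fun g => ?_
  set T := Matrix.toEuclideanCLM (𝕜 := ℂ) M with hT
  rcases (norm_nonneg (T g)).eq_or_lt with h0 | h0
  · rw [← h0]; positivity
  · have h1 := h (T g) g
    rw [← inner_toEuclideanCLM, ← hT, inner_self_eq_norm_sq_to_K] at h1
    have h3 : ‖T g‖ * ‖T g‖ ≤ C * (‖T g‖ * ‖g‖) := by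
      simpa [norm_pow, sq, Complex.norm_real, Real.norm_of_nonneg (norm_nonneg (T g))] using h1
    nlinarith [h0, norm_nonneg g]

open scoped Matrix.Norms.L2Operator ComplexConjugate
open Finset Real

section collapse
variable {α β : Type*} [Fintype α] [Fintype β] [DecidableEq α] [DecidableEq β]

lemma sum_collapse_fst (F : α × β → ℂ) (c : α) (h : ∀ p : α × β, p.1 ≠ c → F p = 0) :
    ∑ p, F p = ∑ p2, F (c, p2) := by
  rw [Fintype.sum_prod_type, Finset.sum_eq_single c]
  · intro b _ hb
    exact Finset.sum_eq_zero fun p2 _ => h (b, p2) hb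
  · intro hc; exact absurd (Finset.mem_univ c) hc

lemma sum_collapse_snd (F : α × β → ℂ) (c : β) (h : ∀ p : α × β, p.2 ≠ c → F p = 0) :
    ∑ p, F p = ∑ p1, F (p1, c) := by
  rw [Fintype.sum_prod_type_right, Finset.sum_eq_single c]
  · intro b _ hb
    exact Finset.sum_eq_zero fun p1 _ => h (p1, b) hb
  · intro hc; exact absurd (Finset.mem_univ c) hc

lemma sumsq_collapse_fst (F : α × β → ℝ) (c : α) (h : ∀ p : α × β, p.1 ≠ c → F p = 0) :
    ∑ p, F p = ∑ p2, F (c, p2) := by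
  rw [Fintype.sum_prod_type, Finset.sum_eq_single c]
  · intro b _ hb
    exact Finset.sum_eq_zero fun p2 _ => h (b, p2) hb
  · intro hc; exact absurd (Finset.mem_univ c) hc

lemma sumsq_collapse_snd (F : α × β → ℝ) (c : β) (h : ∀ p : α × β, p.2 ≠ c → F p = 0) :
    ∑ p, F p = ∑ p1, F (p1, c) := by
  rw [Fintype.sum_prod_type_right, Finset.sum_eq_single c]
  · intro b _ hb
    exact Finset.sum_eq_zero fun p1 _ => h (p1, b) hb
  · intro hc; exact absurd (Finset.mem_univ c) hc

lemma marginal_fst_le (h : EuclideanSpace ℂ (α × β)) :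
    ∑ c : α, Real.sqrt (∑ p : β, ‖h (c, p)‖ ^ 2) ≤ Real.sqrt (Fintype.card α) * ‖h‖ := by
  set a : α → ℝ := fun c => Real.sqrt (∑ p : β, ‖h (c, p)‖ ^ 2) with ha
  have ha0 : ∀ c, 0 ≤ a c := fun c => Real.sqrt_nonneg _
  have hsq : (∑ c, a c) ^ 2 ≤ (Fintype.card α : ℝ) * ‖h‖ ^ 2 := by
    calc (∑ c, a c) ^ 2 ≤ (Finset.univ.card : ℝ) * ∑ c, a c ^ 2 := by
          exact sq_sum_le_card_mul_sum_sq
      _ = (Fintype.card α : ℝ) * ∑ c, a c ^ 2 := by rw [Finset.card_univ]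
      _ = (Fintype.card α : ℝ) * ‖h‖ ^ 2 := by
          congr 1
          have : ∀ c, a c ^ 2 = ∑ p : β, ‖h (c, p)‖ ^ 2 := fun c =>
            Real.sq_sqrt (Finset.sum_nonneg fun p _ => sq_nonneg _)
          simp_rw [this]
          rw [EuclideanSpace.norm_eq, Real.sq_sqrt (Finset.sum_nonneg fun p _ => sq_nonneg _),
            Fintype.sum_prod_type]
  calc ∑ c, a c = Real.sqrt ((∑ c, a c) ^ 2) :=
        (Real.sqrt_sq (Finset.sum_nonneg fun c _ => ha0 c)).symm
    _ ≤ Real.sqrt ((Fintype.card α : ℝ) * ‖h‖ ^ 2) := Real.sqrt_le_sqrt hsq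
    _ = Real.sqrt (Fintype.card α) * ‖h‖ := by
        rw [Real.sqrt_mul (Nat.cast_nonneg _), Real.sqrt_sq (norm_nonneg _)]

lemma marginal_snd_le (h : EuclideanSpace ℂ (α × β)) :
    ∑ c : β, Real.sqrt (∑ p : α, ‖h (p, c)‖ ^ 2) ≤ Real.sqrt (Fintype.card β) * ‖h‖ := by
  set a : β → ℝ := fun c => Real.sqrt (∑ p : α, ‖h (p, c)‖ ^ 2) with ha
  have ha0 : ∀ c, 0 ≤ a c := fun c => Real.sqrt_nonneg _
  have hsq : (∑ c, a c) ^ 2 ≤ (Fintype.card β : ℝ) * ‖h‖ ^ 2 := by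
    calc (∑ c, a c) ^ 2 ≤ (Finset.univ.card : ℝ) * ∑ c, a c ^ 2 := by
          exact sq_sum_le_card_mul_sum_sq
      _ = (Fintype.card β : ℝ) * ∑ c, a c ^ 2 := by rw [Finset.card_univ]
      _ = (Fintype.card β : ℝ) * ‖h‖ ^ 2 := by
          congr 1
          have : ∀ c, a c ^ 2 = ∑ p : α, ‖h (p, c)‖ ^ 2 := fun c =>
            Real.sq_sqrt (Finset.sum_nonneg fun p _ => sq_nonneg _)
          simp_rw [this]
          rw [EuclideanSpace.norm_eq, Real.sq_sqrt (Finset.sum_nonneg fun p _ => sq_nonneg _),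
            Fintype.sum_prod_type_right]
  calc ∑ c, a c = Real.sqrt ((∑ c, a c) ^ 2) :=
        (Real.sqrt_sq (Finset.sum_nonneg fun c _ => ha0 c)).symm
    _ ≤ Real.sqrt ((Fintype.card β : ℝ) * ‖h‖ ^ 2) := Real.sqrt_le_sqrt hsq
    _ = Real.sqrt (Fintype.card β) * ‖h‖ := by
        rw [Real.sqrt_mul (Nat.cast_nonneg _), Real.sqrt_sq (norm_nonneg _)]

end collapse

section PT
variable {n m : ℕ}

def PT (y : Matrix (Fin n × Fin m) (Fin n × Fin m) ℂ) :
    Matrix (Fin n × Fin m) (Fin n × Fin m) ℂ :=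
  Matrix.of fun p q => y (p.1, q.2) (q.1, p.2)

lemma PT_norm_le_n (y : Matrix (Fin n × Fin m) (Fin n × Fin m) ℂ) :
    ‖PT y‖ ≤ (n : ℝ) * ‖y‖ := by
  refine norm_le_of_bilin _ (by positivity) fun f g => ?_
  have expand : (∑ p, ∑ q, conj (f p) * ((PT y) p q * g q))
      = ∑ i : Fin n, ∑ j : Fin n, ∑ k : Fin m, ∑ l : Fin m,
          conj (f (i, k)) * (y (i, l) (j, k) * g (j, l)) := by
    simp only [Fintype.sum_prod_type]
    exact Finset.sum_congr rfl fun i _ => Finset.sum_comm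
  rw [expand]
  set F : Fin n → ℝ := fun i => Real.sqrt (∑ k : Fin m, ‖f (i, k)‖ ^ 2) with hF
  set G : Fin n → ℝ := fun j => Real.sqrt (∑ l : Fin m, ‖g (j, l)‖ ^ 2) with hG
  have hterm : ∀ i j : Fin n,
      ‖∑ k : Fin m, ∑ l : Fin m, conj (f (i, k)) * (y (i, l) (j, k) * g (j, l))‖
        ≤ ‖y‖ * (G j * F i) := by
    intro i j
    set u : EuclideanSpace ℂ (Fin n × Fin m) :=
      WithLp.toLp 2 (fun cp : Fin n × Fin m => if cp.1 = i then conj (g (j, cp.2)) else 0) with hu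
    set v : EuclideanSpace ℂ (Fin n × Fin m) :=
      WithLp.toLp 2 (fun dq : Fin n × Fin m => if dq.1 = j then conj (f (i, dq.2)) else 0) with hv
    have h1 : (∑ p, ∑ q, conj (u p) * (y p q * v q))
        = ∑ k : Fin m, ∑ l : Fin m, conj (f (i, k)) * (y (i, l) (j, k) * g (j, l)) := by
      rw [sum_collapse_fst _ i (fun p hp => by
        apply Finset.sum_eq_zero; intro q _; simp [hu, hp])]
      have hcol : ∀ p2 : Fin m, (∑ q, conj (u (i, p2)) * (y (i, p2) q * v q))
          = ∑ q2 : Fin m, conj (u (i, p2)) * (y (i, p2) (j, q2) * v (j, q2)) := fun p2 =>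
        sum_collapse_fst _ j (fun q hq => by simp [hv, hq])
      simp_rw [hcol]
      rw [Finset.sum_comm]
      refine Finset.sum_congr rfl fun k _ => Finset.sum_congr rfl fun l _ => ?_
      simp only [hu, hv, if_pos rfl, if_true, starRingEnd_self_apply]
      ring
    have hun : ‖u‖ = G j := by
      rw [EuclideanSpace.norm_eq]
      rw [sumsq_collapse_fst (fun cp => ‖u cp‖ ^ 2) i (fun p hp => by simp [hu, hp])]
      simp [hu, hG]
    have hvn : ‖v‖ = F i := by
      rw [EuclideanSpace.norm_eq]
      rw [sumsq_collapse_fst (fun cp => ‖v cp‖ ^ 2) j (fun p hp => by simp [hv, hp])]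
      simp [hv, hF]
    calc ‖∑ k : Fin m, ∑ l : Fin m, conj (f (i, k)) * (y (i, l) (j, k) * g (j, l))‖
        = ‖∑ p, ∑ q, conj (u p) * (y p q * v q)‖ := by rw [h1]
      _ ≤ ‖y‖ * (‖u‖ * ‖v‖) := bilin_le y u v
      _ = ‖y‖ * (G j * F i) := by rw [hun, hvn]
  have hF0 : ∀ i, 0 ≤ F i := fun i => Real.sqrt_nonneg _
  have hG0 : ∀ j, 0 ≤ G j := fun j => Real.sqrt_nonneg _
  have hFs : ∑ i, F i ≤ Real.sqrt n * ‖f‖ := by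
    simpa using marginal_fst_le (α := Fin n) (β := Fin m) f
  have hGs : ∑ j, G j ≤ Real.sqrt n * ‖g‖ := by
    simpa using marginal_fst_le (α := Fin n) (β := Fin m) g
  calc ‖∑ i : Fin n, ∑ j : Fin n, ∑ k : Fin m, ∑ l : Fin m,
          conj (f (i, k)) * (y (i, l) (j, k) * g (j, l))‖
      ≤ ∑ i : Fin n, ∑ j : Fin n,
          ‖∑ k : Fin m, ∑ l : Fin m, conj (f (i, k)) * (y (i, l) (j, k) * g (j, l))‖ :=
        (norm_sum_le _ _).trans (Finset.sum_le_sum fun i _ => norm_sum_le _ _)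
    _ ≤ ∑ i : Fin n, ∑ j : Fin n, ‖y‖ * (G j * F i) :=
        Finset.sum_le_sum fun i _ => Finset.sum_le_sum fun j _ => hterm i j
    _ = ‖y‖ * ((∑ j, G j) * (∑ i, F i)) := by
        simp_rw [← Finset.mul_sum, ← Finset.sum_mul, ← Finset.mul_sum]
        try ring
    _ ≤ ‖y‖ * ((Real.sqrt n * ‖g‖) * (Real.sqrt n * ‖f‖)) := by
        have h2 : (0:ℝ) ≤ ∑ i, F i := Finset.sum_nonneg fun i _ => hF0 i
        have h3 : (0:ℝ) ≤ Real.sqrt n * ‖g‖ := by positivity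
        gcongr <;> try exact norm_nonneg y
    _ = (Real.sqrt n * Real.sqrt n) * ‖y‖ * (‖f‖ * ‖g‖) := by ring
    _ = (n : ℝ) * ‖y‖ * (‖f‖ * ‖g‖) := by
        rw [Real.mul_self_sqrt (Nat.cast_nonneg n)]
    _ = (n : ℝ) * ‖y‖ * (‖f‖ * ‖g‖) := rfl

lemma PT_norm_le_m (y : Matrix (Fin n × Fin m) (Fin n × Fin m) ℂ) :
    ‖PT y‖ ≤ (m : ℝ) * ‖y‖ := by
  refine norm_le_of_bilin _ (by positivity) fun f g => ?_
  have expand : (∑ p, ∑ q, conj (f p) * ((PT y) p q * g q))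
      = ∑ k : Fin m, ∑ l : Fin m, ∑ i : Fin n, ∑ j : Fin n,
          conj (f (i, k)) * (y (i, l) (j, k) * g (j, l)) := by
    simp only [Fintype.sum_prod_type]
    rw [Finset.sum_comm]
    exact Finset.sum_congr rfl fun k _ =>
      (Finset.sum_congr rfl fun i _ => Finset.sum_comm).trans Finset.sum_comm
  rw [expand]
  set F : Fin m → ℝ := fun k => Real.sqrt (∑ i : Fin n, ‖f (i, k)‖ ^ 2) with hF
  set G : Fin m → ℝ := fun l => Real.sqrt (∑ j : Fin n, ‖g (j, l)‖ ^ 2) with hG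
  have hterm : ∀ k l : Fin m,
      ‖∑ i : Fin n, ∑ j : Fin n, conj (f (i, k)) * (y (i, l) (j, k) * g (j, l))‖
        ≤ ‖y‖ * (F k * G l) := by
    intro k l
    set u : EuclideanSpace ℂ (Fin n × Fin m) :=
      WithLp.toLp 2 (fun cp : Fin n × Fin m => if cp.2 = l then f (cp.1, k) else 0) with hu
    set v : EuclideanSpace ℂ (Fin n × Fin m) :=
      WithLp.toLp 2 (fun dq : Fin n × Fin m => if dq.2 = k then g (dq.1, l) else 0) with hv
    have h1 : (∑ p, ∑ q, conj (u p) * (y p q * v q))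
        = ∑ i : Fin n, ∑ j : Fin n, conj (f (i, k)) * (y (i, l) (j, k) * g (j, l)) := by
      rw [sum_collapse_snd _ l (fun p hp => by
        apply Finset.sum_eq_zero; intro q _; simp [hu, hp])]
      have hcol : ∀ p1 : Fin n, (∑ q, conj (u (p1, l)) * (y (p1, l) q * v q))
          = ∑ q1 : Fin n, conj (u (p1, l)) * (y (p1, l) (q1, k) * v (q1, k)) := fun p1 =>
        sum_collapse_snd _ k (fun q hq => by simp [hv, hq])
      simp_rw [hcol]
      refine Finset.sum_congr rfl fun i _ => Finset.sum_congr rfl fun j _ => ?_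
      simp only [hu, hv, if_pos rfl, if_true]
    have hun : ‖u‖ = F k := by
      rw [EuclideanSpace.norm_eq]
      rw [sumsq_collapse_snd (fun cp => ‖u cp‖ ^ 2) l (fun p hp => by simp [hu, hp])]
      simp [hu, hF]
    have hvn : ‖v‖ = G l := by
      rw [EuclideanSpace.norm_eq]
      rw [sumsq_collapse_snd (fun cp => ‖v cp‖ ^ 2) k (fun p hp => by simp [hv, hp])]
      simp [hv, hG]
    calc ‖∑ i : Fin n, ∑ j : Fin n, conj (f (i, k)) * (y (i, l) (j, k) * g (j, l))‖
        = ‖∑ p, ∑ q, conj (u p) * (y p q * v q)‖ := by rw [h1]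
      _ ≤ ‖y‖ * (‖u‖ * ‖v‖) := bilin_le y u v
      _ = ‖y‖ * (F k * G l) := by rw [hun, hvn]
  have hF0 : ∀ k, 0 ≤ F k := fun k => Real.sqrt_nonneg _
  have hG0 : ∀ l, 0 ≤ G l := fun l => Real.sqrt_nonneg _
  have hFs : ∑ k, F k ≤ Real.sqrt m * ‖f‖ := by
    simpa using marginal_snd_le (α := Fin n) (β := Fin m) f
  have hGs : ∑ l, G l ≤ Real.sqrt m * ‖g‖ := by
    simpa using marginal_snd_le (α := Fin n) (β := Fin m) g
  calc ‖∑ k : Fin m, ∑ l : Fin m, ∑ i : Fin n, ∑ j : Fin n,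
          conj (f (i, k)) * (y (i, l) (j, k) * g (j, l))‖
      ≤ ∑ k : Fin m, ∑ l : Fin m,
          ‖∑ i : Fin n, ∑ j : Fin n, conj (f (i, k)) * (y (i, l) (j, k) * g (j, l))‖ :=
        (norm_sum_le _ _).trans (Finset.sum_le_sum fun k _ => norm_sum_le _ _)
    _ ≤ ∑ k : Fin m, ∑ l : Fin m, ‖y‖ * (F k * G l) :=
        Finset.sum_le_sum fun k _ => Finset.sum_le_sum fun l _ => hterm k l
    _ = ‖y‖ * ((∑ k, F k) * (∑ l, G l)) := by
        simp_rw [← Finset.mul_sum, ← Finset.sum_mul]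
        try simp_rw [← Finset.mul_sum]
        try ring
    _ ≤ ‖y‖ * ((Real.sqrt m * ‖f‖) * (Real.sqrt m * ‖g‖)) := by
        have h2 : (0:ℝ) ≤ ∑ l, G l := Finset.sum_nonneg fun l _ => hG0 l
        have h3 : (0:ℝ) ≤ Real.sqrt m * ‖f‖ := by positivity
        gcongr <;> try exact norm_nonneg y
    _ = (Real.sqrt m * Real.sqrt m) * ‖y‖ * (‖f‖ * ‖g‖) := by ring
    _ = (m : ℝ) * ‖y‖ * (‖f‖ * ‖g‖) := by
        rw [Real.mul_self_sqrt (Nat.cast_nonneg m)]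

lemma PT_norm_le (y : Matrix (Fin n × Fin m) (Fin n × Fin m) ℂ) :
    ‖PT y‖ ≤ (min n m : ℕ) * ‖y‖ := by
  have := le_min (PT_norm_le_n y) (PT_norm_le_m y)
  rw [← min_mul_of_nonneg _ _ (norm_nonneg y)] at this
  calc ‖PT y‖ ≤ min (n:ℝ) (m:ℝ) * ‖y‖ := this
    _ = ((min n m : ℕ) : ℝ) * ‖y‖ := by rw [Nat.cast_min]

end PT




noncomputable def EE (n m : ℕ) :
    Matrix (Fin n) (Fin n) (Matrix (Fin m) (Fin m) ℂ)
      ≃⋆ₐ[ℂ] Matrix (Fin n × Fin m) (Fin n × Fin m) ℂ :=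
  { (Matrix.compAlgEquiv (Fin n) (Fin m) ℂ ℂ).toRingEquiv with
    map_star' := fun x => by ext p q; rfl
    map_smul' := fun c x => by ext p q; rfl }

lemma EE_apply {n m : ℕ} (x : Matrix (Fin n) (Fin n) (Matrix (Fin m) (Fin m) ℂ))
    (p q : Fin n × Fin m) : EE n m x p q = x p.1 q.1 p.2 q.2 := rfl

lemma EE_symm_apply {n m : ℕ} (y : Matrix (Fin n × Fin m) (Fin n × Fin m) ℂ)
    (i j : Fin n) (k l : Fin m) : (EE n m).symm y i j k l = y (i, k) (j, l) := rfl


section witness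
variable (n m : ℕ)

def zeta : Fin n × Fin m → ℂ := fun p => if (p.1 : ℕ) = (p.2 : ℕ) then 1 else 0

def MW : Matrix (Fin n × Fin m) (Fin n × Fin m) ℂ :=
  Matrix.of fun p q => zeta n m p * zeta n m q

def dvec : Fin n × Fin m → ℂ := fun p => if (p.2 : ℕ) < n ∧ (p.1 : ℕ) < m then 1 else 0

lemma PT_PT (y : Matrix (Fin n × Fin m) (Fin n × Fin m) ℂ) : PT (PT y) = y := rfl

variable {n m}

lemma zeta_star (p : Fin n × Fin m) : star (zeta n m p) = zeta n m p := by
  simp only [zeta]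
  split_ifs <;> simp

lemma zeta_sq (p : Fin n × Fin m) : zeta n m p * zeta n m p = zeta n m p := by
  simp only [zeta]
  split_ifs <;> norm_num

lemma filter_card (a b : ℕ) : ((Finset.range a).filter (fun i => i < b)).card = min a b := by
  have h : (Finset.range a).filter (fun i => i < b) = Finset.range (min a b) := by
    ext x; simp [Finset.mem_filter, Finset.mem_range, lt_min_iff]
  rw [h, Finset.card_range]

lemma esum (a : ℕ) {b : ℕ} (x y : Fin b) :
    (∑ i : Fin a, (if (i : ℕ) = (x : ℕ) then (1:ℂ) else 0) *
      (if (i : ℕ) = (y : ℕ) then 1 else 0))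
      = if x = y ∧ (x : ℕ) < a then 1 else 0 := by
  by_cases hxy : x = y
  · subst hxy
    by_cases hx : (x : ℕ) < a
    · rw [if_pos ⟨rfl, hx⟩, Finset.sum_eq_single (⟨(x : ℕ), hx⟩ : Fin a)]
      · simp
      · intro i _ hi
        rw [if_neg, zero_mul]
        intro hc; exact hi (Fin.ext hc)
      · intro h; exact absurd (Finset.mem_univ _) h
    · rw [if_neg (by tauto)]
      apply Finset.sum_eq_zero; intro i _
      rw [if_neg, zero_mul]
      intro hc; exact hx (hc ▸ i.isLt)
  · rw [if_neg (by tauto)]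
    apply Finset.sum_eq_zero; intro i _
    by_cases h1 : (i : ℕ) = (x : ℕ)
    · rw [if_pos h1, one_mul, if_neg]
      intro h2; exact hxy (Fin.ext (by rw [← h1]; exact h2))
    · rw [if_neg h1, zero_mul]

lemma esum' (a : ℕ) {b : ℕ} (x y : Fin b) :
    (∑ i : Fin a, (if (x : ℕ) = (i : ℕ) then (1:ℂ) else 0) *
      (if (y : ℕ) = (i : ℕ) then 1 else 0))
      = if x = y ∧ (x : ℕ) < a then 1 else 0 := by
  rw [← esum a x y]
  refine Finset.sum_congr rfl fun i _ => ?_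
  rw [if_congr eq_comm rfl rfl, if_congr (eq_comm (a := (y:ℕ))) rfl rfl]

lemma count_min : (∑ p : Fin n × Fin m, zeta n m p) = ((min n m : ℕ) : ℂ) := by
  rw [Fintype.sum_prod_type]
  have h1 : ∀ c : Fin n, (∑ p : Fin m, zeta n m (c, p))
      = if (c : ℕ) < m then 1 else 0 := by
    intro c
    by_cases h : (c : ℕ) < m
    · rw [if_pos h, Finset.sum_eq_single (⟨(c : ℕ), h⟩ : Fin m)]
      · simp [zeta]
      · intro b _ hb
        simp only [zeta]
        rw [if_neg]
        intro hc; exact hb (Fin.ext hc.symm)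
      · intro h'; exact absurd (Finset.mem_univ _) h'
    · rw [if_neg h]
      apply Finset.sum_eq_zero; intro p _
      simp only [zeta]
      rw [if_neg]
      intro hc; exact h (hc ▸ p.isLt)
  simp_rw [h1]
  rw [Fin.sum_univ_eq_sum_range (fun i => if i < m then (1:ℂ) else 0) n,
    Finset.sum_boole, filter_card]

lemma MW_star : star (MW n m) = MW n m := by
  ext p q
  simp only [Matrix.star_apply, MW, Matrix.of_apply, star_mul']
  rw [zeta_star, zeta_star, mul_comm]

lemma MW_mul_self : MW n m * MW n m = ((min n m : ℕ) : ℂ) • MW n m := by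
  ext p q
  rw [Matrix.mul_apply, Matrix.smul_apply]
  have h : ∀ r : Fin n × Fin m, MW n m p r * MW n m r q
      = (MW n m p q) * zeta n m r := by
    intro r
    simp only [MW, Matrix.of_apply]
    rw [show zeta n m p * zeta n m r * (zeta n m r * zeta n m q)
        = zeta n m p * zeta n m q * (zeta n m r * zeta n m r) by ring, zeta_sq]
  simp_rw [h]
  rw [← Finset.mul_sum, count_min, smul_eq_mul]
  ring

lemma y0_star_mul_self :
    star (PT (MW n m)) * PT (MW n m) = Matrix.diagonal (dvec n m) := by
  ext p q
  rw [Matrix.mul_apply, Matrix.diagonal_apply]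
  have h : ∀ r : Fin n × Fin m, (star (PT (MW n m))) p r * (PT (MW n m)) r q
      = ((if (r.1 : ℕ) = (p.2 : ℕ) then (1:ℂ) else 0) *
          (if (r.1 : ℕ) = (q.2 : ℕ) then 1 else 0)) *
        ((if (p.1 : ℕ) = (r.2 : ℕ) then (1:ℂ) else 0) *
          (if (q.1 : ℕ) = (r.2 : ℕ) then 1 else 0)) := by
    intro r
    simp only [Matrix.star_apply, PT, MW, Matrix.of_apply, star_mul']
    rw [zeta_star, zeta_star]
    simp only [zeta]
    ring
  simp_rw [h]
  rw [Fintype.sum_prod_type]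
  rw [show (∑ i : Fin n, ∑ a : Fin m,
        ((if (i : ℕ) = (p.2 : ℕ) then (1:ℂ) else 0) *
          (if (i : ℕ) = (q.2 : ℕ) then 1 else 0)) *
        ((if (p.1 : ℕ) = (a : ℕ) then (1:ℂ) else 0) *
          (if (q.1 : ℕ) = (a : ℕ) then 1 else 0)))
      = (∑ i : Fin n, ((if (i : ℕ) = (p.2 : ℕ) then (1:ℂ) else 0) *
          (if (i : ℕ) = (q.2 : ℕ) then 1 else 0))) *
        (∑ a : Fin m, ((if (p.1 : ℕ) = (a : ℕ) then (1:ℂ) else 0) *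
          (if (q.1 : ℕ) = (a : ℕ) then 1 else 0))) from by
    rw [Finset.sum_mul]
    exact Finset.sum_congr rfl fun i _ => by rw [Finset.mul_sum]]
  rw [esum n p.2 q.2, esum' m p.1 q.1]
  by_cases hq : p = q
  · subst hq
    rw [if_pos rfl]
    simp only [dvec]
    split_ifs <;> simp_all <;> tauto
  · rw [if_neg hq]
    split_ifs with h1 h2
    · exact absurd (Prod.ext h2.1 h1.1) hq
    all_goals ring
end witness

section norms
variable {n m : ℕ}

lemma D_norm_le_one :
    ‖(Matrix.diagonal (dvec n m) : Matrix (Fin n × Fin m) (Fin n × Fin m) ℂ)‖ ≤ 1 := by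
  set D := (Matrix.diagonal (dvec n m) : Matrix (Fin n × Fin m) (Fin n × Fin m) ℂ) with hD
  have hstar : star D = D := by
    have h' : star (dvec n m) = dvec n m := by
      funext p
      simp only [Pi.star_apply, dvec]
      split_ifs <;> simp
    rw [hD, Matrix.star_eq_conjTranspose, Matrix.diagonal_conjTranspose, h']
  have hmul : D * D = D := by
    have h' : (fun i => dvec n m i * dvec n m i) = dvec n m := by
      funext p
      simp only [dvec]
      split_ifs <;> norm_num
    rw [hD, Matrix.diagonal_mul_diagonal, h']
  have h1 : ‖D‖ * ‖D‖ = ‖D‖ := by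
    rw [← CStarRing.norm_star_mul_self, hstar, hmul]
  nlinarith [norm_nonneg D]

lemma y0_norm_le_one : ‖PT (MW n m)‖ ≤ 1 := by
  have h2 : ‖PT (MW n m)‖ * ‖PT (MW n m)‖ ≤ 1 := by
    rw [← CStarRing.norm_star_mul_self, y0_star_mul_self]
    exact D_norm_le_one
  nlinarith [norm_nonneg (PT (MW n m))]

lemma MW_ne_zero (hn : 1 ≤ n) (hm : 1 ≤ m) : MW n m ≠ 0 := by
  intro h
  have h' : MW n m (⟨0, hn⟩, ⟨0, hm⟩) (⟨0, hn⟩, ⟨0, hm⟩) = 0 := by rw [h]; rfl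
  simp [MW, zeta] at h'

lemma MW_norm (hn : 1 ≤ n) (hm : 1 ≤ m) : ‖MW n m‖ = ((min n m : ℕ) : ℝ) := by
  have h1 : ‖MW n m‖ * ‖MW n m‖ = ((min n m : ℕ) : ℝ) * ‖MW n m‖ := by
    rw [← CStarRing.norm_star_mul_self, MW_star, MW_mul_self, norm_smul]
    congr 1
    simp
  have h0 : ‖MW n m‖ ≠ 0 := norm_ne_zero_iff.mpr (MW_ne_zero hn hm)
  exact mul_right_cancel₀ h0 h1

end norms


section Sstruct
open Matrix
variable {m : ℕ} (S : Matrix (Fin m) (Fin m) ℂ →ₗ[ℂ] Matrix (Fin m) (Fin m) ℂ)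

lemma Smul (hanti : ∀ a b c : Matrix (Fin m) (Fin m) ℂ,
      S (a * star b * c) = S c * star (S b) * S a) :
    ∀ x y, S (x * y) = S y * star (S 1) * S x := by
  intro x y
  have h := hanti x 1 y
  rw [star_one, mul_one] at h
  exact h

lemma u_mul_star (hbij : Function.Bijective S) (hanti : ∀ a b c : Matrix (Fin m) (Fin m) ℂ,
      S (a * star b * c) = S c * star (S b) * S a) :
    S 1 * star (S 1) = 1 := by
  obtain ⟨a, ha⟩ := hbij.2 1
  have h := hanti a 1 1
  rw [star_one, mul_one, mul_one, ha, mul_one] at h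
  exact h.symm

lemma star_mul_u (hbij : Function.Bijective S) (hanti : ∀ a b c : Matrix (Fin m) (Fin m) ℂ,
      S (a * star b * c) = S c * star (S b) * S a) :
    star (S 1) * S 1 = 1 := by
  obtain ⟨c, hc⟩ := hbij.2 1
  have h := hanti 1 1 c
  rw [star_one, mul_one, one_mul, hc, one_mul] at h
  exact h.symm

lemma S_star (hanti : ∀ a b c : Matrix (Fin m) (Fin m) ℂ,
      S (a * star b * c) = S c * star (S b) * S a) :
    ∀ b, S (star b) = S 1 * star (S b) * S 1 := by
  intro b
  have h := hanti 1 b 1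
  rw [one_mul, mul_one] at h
  exact h

noncomputable def psi (hbij : Function.Bijective S)
    (hanti : ∀ a b c : Matrix (Fin m) (Fin m) ℂ,
      S (a * star b * c) = S c * star (S b) * S a) :
    Matrix (Fin m) (Fin m) ℂ ≃⋆ₐ[ℂ] Matrix (Fin m) (Fin m) ℂ where
  toFun b := star (S 1) * S bᵀ
  invFun c := ((LinearEquiv.ofBijective S hbij).symm (S 1 * c))ᵀ
  left_inv b := by
    show ((LinearEquiv.ofBijective S hbij).symm (S 1 * (star (S 1) * S bᵀ)))ᵀ = b
    rw [← mul_assoc, u_mul_star S hbij hanti, one_mul,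
      show S bᵀ = (LinearEquiv.ofBijective S hbij) bᵀ from rfl,
      LinearEquiv.symm_apply_apply, Matrix.transpose_transpose]
  right_inv c := by
    show star (S 1) * S (((LinearEquiv.ofBijective S hbij).symm (S 1 * c))ᵀ)ᵀ = c
    rw [Matrix.transpose_transpose,
      show S ((LinearEquiv.ofBijective S hbij).symm (S 1 * c))
        = (LinearEquiv.ofBijective S hbij) ((LinearEquiv.ofBijective S hbij).symm (S 1 * c))
        from rfl,
      LinearEquiv.apply_symm_apply, ← mul_assoc, star_mul_u S hbij hanti, one_mul]
  map_mul' b c := by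
    show star (S 1) * S (b * c)ᵀ = (star (S 1) * S bᵀ) * (star (S 1) * S cᵀ)
    rw [Matrix.transpose_mul, Smul S hanti cᵀ bᵀ]
    simp only [mul_assoc]
  map_add' b c := by
    show star (S 1) * S (b + c)ᵀ = star (S 1) * S bᵀ + star (S 1) * S cᵀ
    rw [Matrix.transpose_add, map_add, mul_add]
  map_smul' r b := by
    show star (S 1) * S (r • b)ᵀ = r • (star (S 1) * S bᵀ)
    rw [Matrix.transpose_smul, LinearMap.map_smul, mul_smul_comm]
  map_star' b := by
    show star (S 1) * S (star b)ᵀ = star (star (S 1) * S bᵀ)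
    have h : (star b)ᵀ = star (bᵀ) := by
      ext i j
      simp [Matrix.star_apply, Matrix.transpose_apply]
    rw [h, S_star S hanti (bᵀ), StarMul.star_mul, star_star, ← mul_assoc, ← mul_assoc,
      star_mul_u S hbij hanti, one_mul]

lemma S_eq (hbij : Function.Bijective S)
    (hanti : ∀ a b c : Matrix (Fin m) (Fin m) ℂ,
      S (a * star b * c) = S c * star (S b) * S a) (b : Matrix (Fin m) (Fin m) ℂ) :
    S b = S 1 * (psi S hbij hanti bᵀ) := by
  show S b = S 1 * (star (S 1) * S bᵀᵀ)
  rw [Matrix.transpose_transpose, ← mul_assoc, u_mul_star S hbij hanti, one_mul]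

noncomputable def ThetaA (hbij : Function.Bijective S)
    (hanti : ∀ a b c : Matrix (Fin m) (Fin m) ℂ,
      S (a * star b * c) = S c * star (S b) * S a) (n : ℕ) :
    Matrix (Fin n) (Fin n) (Matrix (Fin m) (Fin m) ℂ)
      ≃⋆ₐ[ℂ] Matrix (Fin n) (Fin n) (Matrix (Fin m) (Fin m) ℂ) where
  toFun x := x.map (psi S hbij hanti)
  invFun x := x.map (psi S hbij hanti).symm
  left_inv x := by ext i j; simp [Matrix.map_apply]
  right_inv x := by ext i j; simp [Matrix.map_apply]
  map_mul' x y := by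
    ext i j : 2
    simp only [Matrix.map_apply, Matrix.mul_apply, map_sum, _root_.map_mul]
  map_add' x y := by
    ext i j
    simp only [Matrix.map_apply, Matrix.add_apply, map_add]
  map_smul' c x := by
    ext i j : 2
    simp only [Matrix.map_apply, Matrix.smul_apply, _root_.map_smul]
  map_star' x := by
    ext i j
    simp only [Matrix.map_apply, Matrix.star_apply, map_star]

end Sstruct



open scoped Matrix.Norms.L2Operator

theorem norm_amplification_tro_antiIso_matrix
    (m n : ℕ) (hm : 1 ≤ m) (hn : 1 ≤ n)
    (S : Matrix (Fin m) (Fin m) ℂ →ₗ[ℂ] Matrix (Fin m) (Fin m) ℂ)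
    (hbij : Function.Bijective S)
    (hanti : ∀ a b c : Matrix (Fin m) (Fin m) ℂ,
      S (a * star b * c) = S c * star (S b) * S a)
    (ν : Matrix (Fin n) (Fin n) (Matrix (Fin m) (Fin m) ℂ) → ℝ)
    (hν : IsCStarNorm ν) :
    sSup {r : ℝ | ∃ x, ν x ≤ 1 ∧ r = ν (x.map ⇑S)} = min (n : ℝ) (m : ℝ) := by
  classical
  have hKmin : ((min n m : ℕ) : ℝ) = min (n : ℝ) (m : ℝ) := by
    simp [Nat.cast_min]
  letI : Nonempty (Fin n) := ⟨⟨0, hn⟩⟩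
  letI : Nonempty (Fin m) := ⟨⟨0, hm⟩⟩
  letI : CStarAlgebra (Matrix (Fin n × Fin m) (Fin n × Fin m) ℂ) := {}
  set E := EE n m with hE
  have hνe : ∀ x, ν x = ‖E x‖ := fun x => hν.eq_norm E x
  set ψ := psi S hbij hanti with hψ
  set Θ : Matrix (Fin n × Fin m) (Fin n × Fin m) ℂ
      ≃⋆ₐ[ℂ] Matrix (Fin n × Fin m) (Fin n × Fin m) ℂ :=
    E.symm.trans ((ThetaA S hbij hanti n).trans E) with hΘdef
  have hΘ : ∀ z, ‖Θ z‖ = ‖z‖ := fun z =>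
    NonUnitalStarAlgHom.norm_map Θ (EquivLike.injective Θ) z
  set Du := E (Matrix.diagonal (fun _ : Fin n => S 1)) with hDu
  have hstarDiag : star (Matrix.diagonal (fun _ : Fin n => S 1))
      = Matrix.diagonal (fun _ : Fin n => star (S 1)) := by
    rw [Matrix.star_eq_conjTranspose, Matrix.diagonal_conjTranspose]
    rfl
  have hDuU : Du ∈ unitary (Matrix (Fin n × Fin m) (Fin n × Fin m) ℂ) := by
    rw [Unitary.mem_iff]
    constructor
    · rw [hDu, ← map_star, ← map_mul, hstarDiag, Matrix.diagonal_mul_diagonal]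
      rw [show (fun i : Fin n => star (S 1) * S 1) = fun _ : Fin n => (1 : Matrix (Fin m) (Fin m) ℂ) by
        funext i; rw [star_mul_u S hbij hanti]]
      rw [show Matrix.diagonal (fun _ : Fin n => (1 : Matrix (Fin m) (Fin m) ℂ)) = 1 from
        Matrix.diagonal_one, map_one]
    · rw [hDu, ← map_star, ← map_mul, hstarDiag, Matrix.diagonal_mul_diagonal]
      rw [show (fun i : Fin n => S 1 * star (S 1)) = fun _ : Fin n => (1 : Matrix (Fin m) (Fin m) ℂ) by
        funext i; rw [u_mul_star S hbij hanti]]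
      rw [show Matrix.diagonal (fun _ : Fin n => (1 : Matrix (Fin m) (Fin m) ℂ)) = 1 from
        Matrix.diagonal_one, map_one]
  have key : ∀ x, ν (x.map ⇑S) = ‖PT (E x)‖ := by
    intro x
    rw [hνe]
    have h1 : x.map ⇑S
        = Matrix.diagonal (fun _ : Fin n => S 1) * ((E.symm (PT (E x))).map ψ) := by
      ext i j : 2
      rw [Matrix.map_apply, Matrix.diagonal_mul, Matrix.map_apply]
      have h2 : (E.symm (PT (E x))) i j = (x i j).transpose := by ext k l; rfl
      rw [h2]
      rw [S_eq S hbij hanti (x i j)]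
    calc ‖E (x.map ⇑S)‖ = ‖Du * Θ (PT (E x))‖ := by
          rw [h1, map_mul]
          rfl
      _ = ‖Θ (PT (E x))‖ :=
          CStarRing.norm_coe_unitary_mul (⟨Du, hDuU⟩ : unitary _) _
      _ = ‖PT (E x)‖ := hΘ _
  have hub : ∀ r ∈ {r : ℝ | ∃ x, ν x ≤ 1 ∧ r = ν (x.map ⇑S)}, r ≤ min (n : ℝ) (m : ℝ) := by
    rintro r ⟨x, hx1, rfl⟩
    rw [key x]
    calc ‖PT (E x)‖ ≤ ((min n m : ℕ) : ℝ) * ‖E x‖ := PT_norm_le (E x)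
      _ = ((min n m : ℕ) : ℝ) * ν x := by rw [hνe]
      _ ≤ ((min n m : ℕ) : ℝ) * 1 := by
          exact mul_le_mul_of_nonneg_left hx1 (by positivity)
      _ = min (n : ℝ) (m : ℝ) := by rw [mul_one, hKmin]
  have hmem : min (n : ℝ) (m : ℝ) ∈ {r : ℝ | ∃ x, ν x ≤ 1 ∧ r = ν (x.map ⇑S)} := by
    refine ⟨E.symm (PT (MW n m)), ?_, ?_⟩
    · rw [hνe, StarAlgEquiv.apply_symm_apply]
      exact y0_norm_le_one
    · rw [key, StarAlgEquiv.apply_symm_apply, PT_PT, MW_norm hn hm, hKmin]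
  exact le_antisymm (csSup_le ⟨_, hmem⟩ hub) (le_csSup ⟨_, hub⟩ hmem)
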